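/- arXiv:1907.04299 — 4 statements merged into one kernel-verified Lean document; each statement's English description precedes it below -/
import Mathlib

section
/- Let d > 0, h ≥ 0, T > 0 with d ≥ T/cos(θ_min) + h·tan(θ_min) for some θ_min ∈ [0, π/2). Then t*(θ_min) := d·cos(θ_min) − h·sin(θ_min) ≥ T and θ*(T) := arcsin(d/sqrt(d^2+h^2)) − arcsin(T/sqrt(d^2+h^2)) ≥ θ_min. -/
open Real

theorem far_receiver_bounds
    (d h T θmin : ℝ) (hd : 0 < d) (hh : 0 ≤ h) (hT : 0 < T)
    (hθ1 : 0 ≤ θmin) (hθ2 : θmin < π/2)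
    (hTd : T < Real.sqrt (d^2 + h^2))
    (hfar : d ≥ T / Real.cos θmin + h * Real.tan θmin) :
    d * Real.cos θmin - h * Real.sin θmin ≥ T ∧
    Real.arcsin (d / Real.sqrt (d^2 + h^2))
      - Real.arcsin (T / Real.sqrt (d^2 + h^2)) ≥ θmin := by
  have hcos : 0 < Real.cos θmin := Real.cos_pos_of_mem_Ioo
    ⟨by linarith [Real.pi_pos], hθ2⟩
  have h1 : d * Real.cos θmin - h * Real.sin θmin ≥ T := by
    have := mul_le_mul_of_nonneg_right hfar hcos.le
    rw [Real.tan_eq_sin_div_cos] at this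
    have h' : (T / Real.cos θmin + h * (Real.sin θmin / Real.cos θmin)) * Real.cos θmin
        = T + h * Real.sin θmin := by field_simp
    rw [h'] at this
    linarith
  refine ⟨h1, ?_⟩
  set r := Real.sqrt (d^2 + h^2) with hr_def
  have hrpos : 0 < r := Real.sqrt_pos.2 (by positivity)
  have hr2 : r^2 = d^2 + h^2 := Real.sq_sqrt (by positivity)
  have hdle : d ≤ r := by
    nlinarith [hrpos, hr2]
  have hdr1 : d / r ≤ 1 := (div_le_one hrpos).2 hdle
  have hdr0 : 0 ≤ d / r := by positivity
  have hTr1 : T / r ≤ 1 := (div_le_one hrpos).2 hTd.le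
  have hTrm1 : -1 ≤ T / r := by
    have : (0:ℝ) ≤ T / r := by positivity
    linarith
  set φ := Real.arcsin (d / r) with hφ_def
  have hsinφ : Real.sin φ = d / r := Real.sin_arcsin (by linarith) hdr1
  have hcosφ : Real.cos φ = h / r := by
    rw [hφ_def, Real.cos_arcsin]
    have : 1 - (d/r)^2 = (h/r)^2 := by
      field_simp
      nlinarith [hr2]
    rw [this, Real.sqrt_sq (by positivity)]
  have hφ0 : 0 ≤ φ := Real.arcsin_nonneg.2 hdr0
  have hφ2 : φ ≤ π/2 := Real.arcsin_le_pi_div_two _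
  have hkey : T / r ≤ Real.sin (φ - θmin) := by
    rw [Real.sin_sub, hsinφ, hcosφ]
    rw [div_le_iff₀ hrpos]
    have : (d / r * Real.cos θmin - h / r * Real.sin θmin) * r
        = d * Real.cos θmin - h * Real.sin θmin := by field_simp
    rw [this]
    linarith
  have hmono : Real.arcsin (T / r) ≤ Real.arcsin (Real.sin (φ - θmin)) :=
    Real.monotone_arcsin hkey
  rw [Real.arcsin_sin (by linarith) (by linarith)] at hmono
  linarith
end

section
/- Let d > 0, h ≥ 0, T > 0, θ_min ∈ [0, π/2), and suppose T·cos(θ_min) ≤ d ≤ T/cos(θ_min) + h·tan(θ_min). Then t*(θ_min) = d·cos(θ_min) − h·sin(θ_min) ≤ T and, if T < sqrt(d^2+h^2), θ*(T) = arcsin(d/sqrt(d^2+h^2)) − arcsin(T/sqrt(d^2+h^2)) ≤ θ_min. -/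
open Real

theorem mid_receiver_bounds
    (d h T θmin : ℝ) (hd : 0 < d) (hh : 0 ≤ h) (hT : 0 < T)
    (hθ1 : 0 ≤ θmin) (hθ2 : θmin < π/2)
    (hlow : T * Real.cos θmin ≤ d)
    (hhigh : d ≤ T / Real.cos θmin + h * Real.tan θmin) :
    d * Real.cos θmin - h * Real.sin θmin ≤ T ∧
    (T < Real.sqrt (d^2 + h^2) →
      Real.arcsin (d / Real.sqrt (d^2 + h^2))
        - Real.arcsin (T / Real.sqrt (d^2 + h^2)) ≤ θmin) := by
  have hc : 0 < Real.cos θmin := Real.cos_pos_of_mem_Ioo ⟨by linarith [Real.pi_pos], hθ2⟩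
  have key : d * Real.cos θmin - h * Real.sin θmin ≤ T := by
    have h1 := mul_le_mul_of_nonneg_right hhigh hc.le
    have e : (T / Real.cos θmin + h * Real.tan θmin) * Real.cos θmin
        = T + h * Real.sin θmin := by
      rw [Real.tan_eq_sin_div_cos]; field_simp
    rw [e] at h1
    linarith
  refine ⟨key, fun hTR => ?_⟩
  set R := Real.sqrt (d^2 + h^2) with hRdef
  have hR : 0 < R := Real.sqrt_pos.2 (by positivity)
  have hR2 : R^2 = d^2 + h^2 := Real.sq_sqrt (by positivity)
  have hdR : d ≤ R := by nlinarith
  have hhR : h ≤ R := by nlinarith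
  set α := Real.arcsin (d / R)
  set β := Real.arcsin (T / R)
  have hdmem : d / R ∈ Set.Icc (-1 : ℝ) 1 := by
    constructor
    · linarith [div_nonneg hd.le hR.le]
    · rw [div_le_one hR]; exact hdR
  have hTmem : T / R ∈ Set.Icc (-1 : ℝ) 1 := by
    constructor
    · linarith [div_nonneg hT.le hR.le]
    · rw [div_le_one hR]; exact hTR.le
  have hsinα : Real.sin α = d / R := Real.sin_arcsin hdmem.1 hdmem.2
  have hsinβ : Real.sin β = T / R := Real.sin_arcsin hTmem.1 hTmem.2
  have hcosα : Real.cos α = h / R := by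
    rw [Real.cos_arcsin]
    rw [show 1 - (d/R)^2 = (h/R)^2 by field_simp; nlinarith]
    exact Real.sqrt_sq (by positivity)
  have hα1 : 0 ≤ α := Real.arcsin_nonneg.2 (div_nonneg hd.le hR.le)
  have hα2 : α ≤ π/2 := Real.arcsin_le_pi_div_two _
  have hβ1 : 0 ≤ β := Real.arcsin_nonneg.2 (div_nonneg hT.le hR.le)
  have hβ2 : β ≤ π/2 := Real.arcsin_le_pi_div_two _
  have hsinle : Real.sin (α - θmin) ≤ Real.sin β := by
    rw [Real.sin_sub, hsinα, hcosα, hsinβ]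
    rw [div_mul_eq_mul_div, div_mul_eq_mul_div, ← sub_div]
    exact (div_le_div_iff_of_pos_right hR).2 key
  by_contra hcon
  push_neg at hcon
  have : Real.sin β < Real.sin (α - θmin) :=
    Real.strictMonoOn_sin ⟨by linarith, by linarith⟩ ⟨by linarith, by linarith⟩ (by linarith)
  linarith
end

section
/- For d > 0, h > 0, T > 0 with T < sqrt(d^2 + h^2), let θ* = arcsin(d/sqrt(d^2+h^2)) − arcsin(T/sqrt(d^2+h^2)). Then tan of the elevation angle of the TUAV at (d − T·cos θ*, h + T·sin θ*) from the origin equals (h·sqrt(h^2+d^2−T^2) + dT)/(d·sqrt(h^2+d^2−T^2) − h·T), and the distance from the TUAV to the origin equals sqrt(h^2 + d^2 − T^2). -/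
open Real

theorem suboptimal_far_case_formulas
    (d h T : ℝ) (hd : 0 < d) (hh : 0 < h) (hT : 0 < T)
    (hTd : T < Real.sqrt (d^2 + h^2))
    (hden : h * T < d * Real.sqrt (h^2 + d^2 - T^2)) :
    (h + T * Real.sin (Real.arcsin (d / Real.sqrt (d^2 + h^2))
        - Real.arcsin (T / Real.sqrt (d^2 + h^2)))) /
      (d - T * Real.cos (Real.arcsin (d / Real.sqrt (d^2 + h^2))
        - Real.arcsin (T / Real.sqrt (d^2 + h^2))))
      = (h * Real.sqrt (h^2 + d^2 - T^2) + d * T) /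
        (d * Real.sqrt (h^2 + d^2 - T^2) - h * T) ∧
    Real.sqrt ((d - T * Real.cos (Real.arcsin (d / Real.sqrt (d^2 + h^2))
        - Real.arcsin (T / Real.sqrt (d^2 + h^2))))^2
      + (h + T * Real.sin (Real.arcsin (d / Real.sqrt (d^2 + h^2))
        - Real.arcsin (T / Real.sqrt (d^2 + h^2))))^2)
      = Real.sqrt (h^2 + d^2 - T^2) := by
  set S := Real.sqrt (d^2 + h^2) with hSdef
  set R := Real.sqrt (h^2 + d^2 - T^2) with hRdef
  have hS0 : 0 < S := Real.sqrt_pos.2 (by positivity)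
  have hSsq : S^2 = d^2 + h^2 := Real.sq_sqrt (by positivity)
  have hT2 : T^2 < S^2 := by nlinarith
  have hRsq : R^2 = h^2 + d^2 - T^2 := Real.sq_sqrt (by nlinarith)
  have hR0 : 0 < R := Real.sqrt_pos.2 (by nlinarith)
  have hS2R : S^2 = R^2 + T^2 := by nlinarith
  have hdS : d ≤ S := by nlinarith
  have hTS : T ≤ S := hTd.le
  have hs1 : Real.sin (Real.arcsin (d/S)) = d/S :=
    Real.sin_arcsin ((by norm_num : (-1:ℝ) ≤ 0).trans (by positivity : (0:ℝ) ≤ d/S)) (by rw [div_le_one hS0]; exact hdS)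
  have hs2 : Real.sin (Real.arcsin (T/S)) = T/S :=
    Real.sin_arcsin ((by norm_num : (-1:ℝ) ≤ 0).trans (by positivity : (0:ℝ) ≤ T/S)) (by rw [div_le_one hS0]; exact hTS)
  have hc1 : Real.cos (Real.arcsin (d/S)) = h/S := by
    rw [Real.cos_arcsin]
    have h1 : 1 - (d/S)^2 = (h/S)^2 := by
      field_simp
      nlinarith
    rw [h1, Real.sqrt_sq (by positivity)]
  have hc2 : Real.cos (Real.arcsin (T/S)) = R/S := by
    rw [Real.cos_arcsin]
    have h1 : 1 - (T/S)^2 = (R/S)^2 := by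
      field_simp
      nlinarith
    rw [h1, Real.sqrt_sq (by positivity)]
  have hsin : Real.sin (Real.arcsin (d/S) - Real.arcsin (T/S)) = (d*R - h*T)/S^2 := by
    rw [Real.sin_sub, hs1, hs2, hc1, hc2, div_mul_div_comm, div_mul_div_comm,
      div_sub_div_same, sq]
  have hcos : Real.cos (Real.arcsin (d/S) - Real.arcsin (T/S)) = (h*R + d*T)/S^2 := by
    rw [Real.cos_sub, hs1, hs2, hc1, hc2, div_mul_div_comm, div_mul_div_comm,
      ← add_div, sq]
  have hnum : h + T * ((d*R - h*T)/S^2) = R*(h*R + d*T)/S^2 := by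
    field_simp
    linear_combination h * hS2R
  have hden2 : d - T * ((h*R + d*T)/S^2) = R*(d*R - h*T)/S^2 := by
    field_simp
    linear_combination d * hS2R
  have hpos : 0 < d*R - h*T := by linarith
  rw [hsin, hcos, hnum, hden2]
  constructor
  · rw [div_div_div_comm, div_self (by positivity : (S:ℝ)^2 ≠ 0), div_one,
      mul_div_mul_left _ _ (ne_of_gt hR0)]
  · have hinner : (R*(d*R - h*T)/S^2)^2 + (R*(h*R + d*T)/S^2)^2 = R^2 := by
      rw [div_pow, div_pow, ← add_div, div_eq_iff (by positivity : ((S:ℝ)^2)^2 ≠ 0)]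
      linear_combination (-(R^2*(R^2+T^2))) * hSsq + (-(R^2*S^2)) * hS2R
    rw [hinner, Real.sqrt_sq hR0.le]
end

section
/- Let h_b ≥ 0, T > 0, θ ∈ (0, π/2), β > 0, γ > 0. Then 2πβ ∫_0^{T cos θ} exp(−(h_b + r·tan θ)^2/γ^2) · r dr = (πβγ/tan^2 θ) · [ γ·(exp(−h_b^2/γ^2) − exp(−(h_b + T sin θ)^2/γ^2)) − h_b·(Γ_low(1/2, (h_b + T sin θ)^2/γ^2) − Γ_low(1/2, h_b^2/γ^2)) ], where Γ_low(s, x) = ∫_0^x u^{s−1} e^{−u} du is the lower incomplete Gamma function. -/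
open Real

noncomputable def lowerGamma (s x : ℝ) : ℝ :=
  ∫ u in (0:ℝ)..x, u ^ (s - 1) * Real.exp (-u)

lemma lowerGamma_hasDerivAt {x : ℝ} (hx : 0 < x) :
    HasDerivAt (lowerGamma (1/2)) (x ^ ((1:ℝ)/2 - 1) * Real.exp (-x)) x := by
  have hint : IntervalIntegrable (fun u : ℝ => u ^ ((1:ℝ)/2 - 1) * Real.exp (-u)) MeasureTheory.volume 0 x := by
    apply (intervalIntegral.intervalIntegrable_rpow' (by norm_num)).mul_continuousOn
    exact (Real.continuous_exp.comp continuous_neg).continuousOn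
  have hco : ContinuousOn (fun u : ℝ => u ^ ((1:ℝ)/2 - 1) * Real.exp (-u)) (Set.Ioi 0) := by
    intro u hu
    exact ((Real.continuousAt_rpow_const u _ (Or.inl (ne_of_gt hu))).mul
      ((Real.continuous_exp.comp continuous_neg).continuousAt)).continuousWithinAt
  have hmeas : StronglyMeasurableAtFilter (fun u : ℝ => u ^ ((1:ℝ)/2 - 1) * Real.exp (-u)) (nhds x) :=
    hco.stronglyMeasurableAtFilter isOpen_Ioi x hx
  have hcont : ContinuousAt (fun u : ℝ => u ^ ((1:ℝ)/2 - 1) * Real.exp (-u)) x := by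
    apply ContinuousAt.mul
    · exact Real.continuousAt_rpow_const x _ (Or.inl hx.ne')
    · exact (Real.continuous_exp.comp continuous_neg).continuousAt
  exact intervalIntegral.integral_hasDerivAt_right hint hmeas hcont

lemma key_integral (hb t γ b : ℝ) (hhb : 0 ≤ hb) (ht : 0 < t) (hγ : 0 < γ) (hb0 : 0 ≤ b) :
    ∫ r in (0:ℝ)..b, Real.exp (-((hb + r*t)^2 / γ^2)) * r
      = γ^2/(2*t^2) * (Real.exp (-(hb^2/γ^2)) - Real.exp (-((hb + b*t)^2/γ^2)))
        - hb*γ/(2*t^2) * (lowerGamma (1/2) ((hb + b*t)^2/γ^2) - lowerGamma (1/2) (hb^2/γ^2)) := by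
  have hint : IntervalIntegrable (fun r : ℝ => Real.exp (-((hb + r*t)^2 / γ^2)) * r) MeasureTheory.volume 0 b := by
    apply Continuous.intervalIntegrable
    continuity
  have h1 : ∀ r : ℝ, HasDerivAt (fun r : ℝ => (hb + r*t)^2/γ^2) (2*(hb + r*t)*t/γ^2) r := by
    intro r
    have h := ((((hasDerivAt_id r).mul_const t).const_add hb).pow 2).div_const (γ^2)
    refine h.congr_deriv ?_
    simp only [id_eq]
    ring
  rcases eq_or_lt_of_le hhb with h0 | hpos
  · -- hb = 0
    subst h0
    have hderiv : ∀ r ∈ Set.uIcc (0:ℝ) b,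
        HasDerivAt (fun r : ℝ => -(γ^2/(2*t^2)) * Real.exp (-(((0:ℝ) + r*t)^2/γ^2)))
          (Real.exp (-(((0:ℝ) + r*t)^2 / γ^2)) * r) r := by
      intro r _
      have h := ((h1 r).neg.exp).const_mul (-(γ^2/(2*t^2)))
      refine h.congr_deriv ?_
      simp only [Pi.neg_apply]
      field_simp
      ring
    rw [intervalIntegral.integral_eq_sub_of_hasDerivAt hderiv hint]
    simp only [zero_mul, add_zero, zero_add, zero_pow, mul_zero]
    rw [show ((0:ℝ)^2/γ^2) = 0 by simp]
    simp [Real.exp_zero]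
    ring
  · -- hb > 0
    set A : ℝ := -(γ^2/(2*t^2)) with hA
    set B : ℝ := hb*γ/(2*t^2) with hB
    have hderiv : ∀ r ∈ Set.uIcc (0:ℝ) b,
        HasDerivAt (fun r : ℝ => A * Real.exp (-((hb + r*t)^2/γ^2))
            - B * lowerGamma (1/2) ((hb + r*t)^2/γ^2))
          (Real.exp (-((hb + r*t)^2 / γ^2)) * r) r := by
      intro r hr
      rw [Set.uIcc_of_le hb0] at hr
      have hr0 : 0 ≤ r := hr.1
      have ha : 0 < hb + r*t := by positivity
      have hx : 0 < (hb + r*t)^2/γ^2 := by positivity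
      have h2 := (lowerGamma_hasDerivAt hx).comp r (h1 r)
      have h3 := ((h1 r).neg.exp).const_mul A
      have h4 := h3.sub (h2.const_mul B)
      refine h4.congr_deriv ?_
      simp only [Pi.neg_apply]
      have hxe : ((hb + r*t)^2/γ^2 : ℝ) ^ ((1:ℝ)/2 - 1) = γ/(hb + r*t) := by
        rw [show ((1:ℝ)/2 - 1) = -(1/2) by norm_num, Real.rpow_neg hx.le,
          ← Real.sqrt_eq_rpow, show (hb + r*t)^2/γ^2 = ((hb + r*t)/γ)^2 by rw [div_pow],
          Real.sqrt_sq (by positivity), inv_div]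
      rw [hxe, hA, hB]
      field_simp
      ring
    rw [intervalIntegral.integral_eq_sub_of_hasDerivAt hderiv hint]
    simp only [zero_mul, add_zero]
    ring

theorem tuav_integral_identity
    (hb T θ β γ : ℝ) (hhb : 0 ≤ hb) (hT : 0 < T)
    (hθ : θ ∈ Set.Ioo 0 (π/2)) (hβ : 0 < β) (hγ : 0 < γ) :
    2 * π * β * ∫ r in (0:ℝ)..(T * Real.cos θ),
        Real.exp (-(hb + r * Real.tan θ)^2 / γ^2) * r
    = (π * β * γ / (Real.tan θ)^2) *
      (γ * (Real.exp (-hb^2 / γ^2) - Real.exp (-(hb + T * Real.sin θ)^2 / γ^2))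
        - hb * (lowerGamma (1/2) ((hb + T * Real.sin θ)^2 / γ^2)
                - lowerGamma (1/2) (hb^2 / γ^2))) := by
  obtain ⟨hθ0, hθ1⟩ := hθ
  have hc : 0 < Real.cos θ := Real.cos_pos_of_mem_Ioo ⟨by linarith [Real.pi_pos], hθ1⟩
  have hs : 0 < Real.sin θ := Real.sin_pos_of_pos_of_lt_pi hθ0 (by linarith [Real.pi_pos])
  have ht : 0 < Real.tan θ := Real.tan_pos_of_pos_of_lt_pi_div_two hθ0 hθ1
  have hb0 : 0 ≤ T * Real.cos θ := by positivity
  have hts : T * Real.cos θ * Real.tan θ = T * Real.sin θ := by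
    rw [Real.tan_eq_sin_div_cos]
    field_simp
  have key := key_integral hb (Real.tan θ) γ (T * Real.cos θ) hhb ht hγ hb0
  rw [hts] at key
  simp only [neg_div] at *
  rw [key]
  have htn : Real.tan θ ≠ 0 := ht.ne'
  field_simp
end
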